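/- Let F₁, F₂ : ℝᵖ → ℝ^q be linear maps such that for every x ∈ ℝᵖ, the vectors F₁x and F₂x are linearly dependent (i.e., rank(F₁x, F₂x) ≤ 1). Then either F₁ and F₂ are proportional (there exist scalars (λ,μ) ≠ (0,0) with λF₁ = μF₂), or there exist a vector w ∈ ℝ^q and linear forms λ₁, λ₂ on ℝᵖ such that F₁x = λ₁(x)·w and F₂x = λ₂(x)·w for all x. -/

import Mathlib

/-- Two vectors are "Indep" if no nontrivial combination vanishes. -/
def Indep {W : Type*} [AddCommGroup W] [Module ℝ W] (u v : W) : Prop :=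
  ∀ s t : ℝ, s • u + t • v = 0 → s = 0 ∧ t = 0

lemma smul_solve {W : Type*} [AddCommGroup W] [Module ℝ W] {a b : ℝ} {u v : W}
    (hb : b ≠ 0) (h : a • u + b • v = 0) : v = (-a / b) • u := by
  have h3 : b • v = (-a) • u := by
    rw [neg_smul, eq_neg_iff_add_eq_zero, add_comm]; exact h
  have h4 := congrArg (fun y => b⁻¹ • y) h3
  simp only [smul_smul, inv_mul_cancel₀ hb, one_smul] at h4
  rw [h4]; congr 1; ring

lemma smul_cancel_vec {W : Type*} [AddCommGroup W] [Module ℝ W] {c c' : ℝ} {u : W}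
    (hu : u ≠ 0) (h : c • u = c' • u) : c = c' := by
  have : (c - c') • u = 0 := by rw [sub_smul, h, sub_self]
  rcases smul_eq_zero.mp this with h' | h'
  · linarith [h']
  · exact absurd h' hu

lemma indep_pair_const {p q : ℕ} (F₁ F₂ : (Fin p → ℝ) →ₗ[ℝ] (Fin q → ℝ))
    (hdep : ∀ x : Fin p → ℝ, ∃ a b : ℝ, (a ≠ 0 ∨ b ≠ 0) ∧ a • F₁ x + b • F₂ x = 0)
    (z w : Fin p → ℝ) (h : Indep (F₁ z) (F₁ w)) :
    ∃ c : ℝ, F₂ z = c • F₁ z ∧ F₂ w = c • F₁ w := by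
  obtain ⟨a, b, hab, he⟩ := hdep z
  have hb : b ≠ 0 := by
    rintro rfl
    have ha : a ≠ 0 := hab.resolve_right (by simp)
    have := (h a 0 (by simpa using he)).1
    exact ha this
  have hc₁ : F₂ z = (-a / b) • F₁ z := smul_solve hb he
  obtain ⟨a', b', hab', he'⟩ := hdep w
  have hb' : b' ≠ 0 := by
    rintro rfl
    have ha' : a' ≠ 0 := hab'.resolve_right (by simp)
    have := (h 0 a' (by simpa [add_comm] using he')).2
    exact ha' this
  have hc₂ : F₂ w = (-a' / b') • F₁ w := smul_solve hb' he'
  set c₁ := -a / b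
  set c₂ := -a' / b'
  obtain ⟨a'', b'', hab'', he''⟩ := hdep (z + w)
  have key : (a'' + b'' * c₁) • F₁ z + (a'' + b'' * c₂) • F₁ w = 0 := by
    have : a'' • F₁ (z + w) + b'' • F₂ (z + w) = 0 := he''
    rw [map_add, map_add, hc₁, hc₂] at this
    rw [← this]
    module
  obtain ⟨e1, e2⟩ := h _ _ key
  have hb'' : b'' ≠ 0 := by
    rintro rfl
    have ha'' : a'' ≠ 0 := hab''.resolve_right (by simp)
    simp at e1
    exact ha'' e1
  have hcc : c₁ = c₂ := by
    have : b'' * c₁ = b'' * c₂ := by linarith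
    exact mul_left_cancel₀ hb'' this
  exact ⟨c₁, hc₁, by rw [hc₂, hcc]⟩

lemma dep_resolve {p q : ℕ} (F₁ : (Fin p → ℝ) →ₗ[ℝ] (Fin q → ℝ))
    {x z : Fin p → ℝ} (hz : F₁ z ≠ 0) (h : ¬ Indep (F₁ x) (F₁ z)) :
    ∃ r : ℝ, F₁ x = r • F₁ z := by
  simp only [Indep, not_forall] at h
  obtain ⟨s, t, hst, hne⟩ := h
  have hs : s ≠ 0 := by
    rintro rfl
    rcases eq_or_ne t 0 with rfl | ht
    · exact hne ⟨rfl, rfl⟩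
    · have : F₁ z = 0 := by
        have := hst; simp only [zero_smul, zero_add] at this
        exact (smul_eq_zero.mp this).resolve_left ht
      exact hz this
  exact ⟨-t / s, smul_solve hs (by rw [add_comm]; exact hst)⟩

lemma proportional_of_indep {p q : ℕ} (F₁ F₂ : (Fin p → ℝ) →ₗ[ℝ] (Fin q → ℝ))
    (hdep : ∀ x : Fin p → ℝ, ∃ a b : ℝ, (a ≠ 0 ∨ b ≠ 0) ∧ a • F₁ x + b • F₂ x = 0)
    (z w : Fin p → ℝ) (h : Indep (F₁ z) (F₁ w)) :
    ∃ c : ℝ, ∀ x, F₂ x = c • F₁ x := by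
  have hz : F₁ z ≠ 0 := by
    intro h0
    have := (h 1 0 (by simp [h0])).1
    norm_num at this
  have hw : F₁ w ≠ 0 := by
    intro h0
    have := (h 0 1 (by simp [h0])).2
    norm_num at this
  obtain ⟨c, hcz, hcw⟩ := indep_pair_const F₁ F₂ hdep z w h
  refine ⟨c, fun x => ?_⟩
  by_cases hx : Indep (F₁ x) (F₁ z)
  · obtain ⟨c', h1, h2⟩ := indep_pair_const F₁ F₂ hdep x z hx
    rw [h1, smul_cancel_vec hz (h2.symm.trans hcz)]
  · by_cases hx0 : F₁ x = 0
    · -- use x + z and w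
      have hxz : Indep (F₁ (x + z)) (F₁ w) := by
        intro s t hst
        apply h s t
        rw [map_add, hx0, zero_add] at hst
        exact hst
      obtain ⟨c'', h1, h2⟩ := indep_pair_const F₁ F₂ hdep (x + z) w hxz
      have hc'' : c'' = c := smul_cancel_vec hw (h2.symm.trans hcw)
      rw [map_add, map_add, hx0, zero_add, hc''] at h1
      have : F₂ x = 0 := by
        have := h1
        rwa [hcz, add_eq_right] at this
      rw [this, hx0, smul_zero]
    · -- F₁ x = r • F₁ z with r ≠ 0, so Indep (F₁ x) (F₁ w)
      obtain ⟨r, hr⟩ := dep_resolve F₁ hz hx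
      have hr0 : r ≠ 0 := by rintro rfl; simp at hr; exact hx0 hr
      have hxw : Indep (F₁ x) (F₁ w) := by
        intro s t hst
        rw [hr, smul_smul] at hst
        obtain ⟨e1, e2⟩ := h _ _ hst
        exact ⟨by

          rcases mul_eq_zero.mp e1 with h' | h'
          · exact h'
          · exact absurd h' hr0, e2⟩
      obtain ⟨c', h1, h2⟩ := indep_pair_const F₁ F₂ hdep x w hxw
      rw [h1, smul_cancel_vec hw (h2.symm.trans hcw)]

/-- rank-one structure lemma -/
lemma rank_one_structure {p q : ℕ} (F : (Fin p → ℝ) →ₗ[ℝ] (Fin q → ℝ))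
    {x₀ : Fin p → ℝ} (hx₀ : F x₀ ≠ 0)
    (hr : ∀ z w : Fin p → ℝ, ¬ Indep (F z) (F w)) :
    ∃ l : (Fin p → ℝ) →ₗ[ℝ] ℝ, (∀ x, F x = l x • F x₀) ∧ l x₀ = 1 := by
  set w₀ := F x₀ with hw₀
  obtain ⟨i, hi⟩ : ∃ i, w₀ i ≠ 0 := by
    by_contra hc
    push_neg at hc
    exact hx₀ (funext hc)
  refine ⟨(w₀ i)⁻¹ • ((LinearMap.proj i).comp F), fun x => ?_, ?_⟩
  · obtain ⟨r, hr'⟩ := dep_resolve F hx₀ (hr x x₀)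
    rw [hr']
    simp only [LinearMap.smul_apply, LinearMap.coe_comp, Function.comp_apply,
      LinearMap.proj_apply, smul_eq_mul]
    rw [hr']
    congr 1
    simp only [Pi.smul_apply, smul_eq_mul]
    field_simp
    rw [hw₀]
  · simp only [LinearMap.smul_apply, LinearMap.coe_comp, Function.comp_apply,
      LinearMap.proj_apply, smul_eq_mul, ← hw₀]
    field_simp

/-- If `F₁, F₂ : ℝᵖ → ℝ^q` are linear maps with `F₁x` and
`F₂x` linearly dependent for every `x`, then either `F₁` and `F₂` are
proportional, or both take values on a single line `ℝw`. -/
theorem pointwise_dependent_linear_maps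
    (p q : ℕ) (F₁ F₂ : (Fin p → ℝ) →ₗ[ℝ] (Fin q → ℝ))
    (hdep : ∀ x : Fin p → ℝ, ∃ a b : ℝ, (a ≠ 0 ∨ b ≠ 0) ∧ a • F₁ x + b • F₂ x = 0) :
    (∃ a b : ℝ, (a ≠ 0 ∨ b ≠ 0) ∧ a • F₁ = b • F₂) ∨
    (∃ (w : Fin q → ℝ) (l₁ l₂ : (Fin p → ℝ) →ₗ[ℝ] ℝ),
      ∀ x : Fin p → ℝ, F₁ x = l₁ x • w ∧ F₂ x = l₂ x • w) := by
  by_cases hF1 : F₁ = 0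
  · exact Or.inl ⟨1, 0, Or.inl one_ne_zero, by simp [hF1]⟩
  by_cases hF2 : F₂ = 0
  · exact Or.inl ⟨0, 1, Or.inr one_ne_zero, by simp [hF2]⟩
  by_cases h1 : ∃ z w, Indep (F₁ z) (F₁ w)
  · obtain ⟨z, w, h⟩ := h1
    obtain ⟨c, hc⟩ := proportional_of_indep F₁ F₂ hdep z w h
    exact Or.inl ⟨c, 1, Or.inr one_ne_zero, LinearMap.ext fun x => by simp [hc x]⟩
  by_cases h2 : ∃ z w, Indep (F₂ z) (F₂ w)
  · obtain ⟨z, w, h⟩ := h2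
    have hdep' : ∀ x : Fin p → ℝ, ∃ a b : ℝ, (a ≠ 0 ∨ b ≠ 0) ∧ a • F₂ x + b • F₁ x = 0 := by
      intro x
      obtain ⟨a, b, hab, he⟩ := hdep x
      exact ⟨b, a, hab.symm, by rw [add_comm]; exact he⟩
    obtain ⟨c, hc⟩ := proportional_of_indep F₂ F₁ hdep' z w h
    exact Or.inl ⟨1, c, Or.inl one_ne_zero, LinearMap.ext fun x => by simp [hc x]⟩
  push_neg at h1 h2
  -- both have rank ≤ 1
  obtain ⟨x₁, hx₁⟩ : ∃ x, F₁ x ≠ 0 := by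
    by_contra hc
    push_neg at hc
    exact hF1 (LinearMap.ext fun x => hc x)
  obtain ⟨x₂, hx₂⟩ : ∃ x, F₂ x ≠ 0 := by
    by_contra hc
    push_neg at hc
    exact hF2 (LinearMap.ext fun x => hc x)
  obtain ⟨l₁, hl₁, hl₁x⟩ := rank_one_structure F₁ hx₁ h1
  obtain ⟨l₂, hl₂, hl₂x⟩ := rank_one_structure F₂ hx₂ h2
  set w₁ := F₁ x₁
  set w₂ := F₂ x₂
  -- find a point where both forms are nonzero
  obtain ⟨y, hy1, hy2⟩ : ∃ y, l₁ y ≠ 0 ∧ l₂ y ≠ 0 := by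
    by_cases ha : l₂ x₁ ≠ 0
    · exact ⟨x₁, by rw [hl₁x]; exact one_ne_zero, ha⟩
    by_cases hb : l₁ x₂ ≠ 0
    · exact ⟨x₂, hb, by rw [hl₂x]; exact one_ne_zero⟩
    push_neg at ha hb
    refine ⟨x₁ + x₂, ?_, ?_⟩
    · rw [map_add, hl₁x, hb]; norm_num
    · rw [map_add, hl₂x, ha]; norm_num
  obtain ⟨a, b, hab, he⟩ := hdep y
  rw [hl₁ y, hl₂ y] at he
  have he' : (a * l₁ y) • w₁ + (b * l₂ y) • w₂ = 0 := by
    rw [← he]; module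
  have hb : b ≠ 0 := by
    rintro rfl
    have ha : a ≠ 0 := hab.resolve_right (by simp)
    simp only [zero_mul, zero_smul, add_zero] at he'
    rcases smul_eq_zero.mp he' with h' | h'
    · rcases mul_eq_zero.mp h' with h'' | h''
      · exact ha h''
      · exact hy1 h''
    · exact hx₁ h'
  have hbl : b * l₂ y ≠ 0 := mul_ne_zero hb hy2
  have hw2 : w₂ = (-(a * l₁ y) / (b * l₂ y)) • w₁ := smul_solve hbl he'
  set s := -(a * l₁ y) / (b * l₂ y)
  refine Or.inr ⟨w₁, l₁, s • l₂, fun x => ⟨hl₁ x, ?_⟩⟩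
  rw [hl₂ x, hw2]
  simp only [LinearMap.smul_apply, smul_eq_mul, smul_smul]
  ring_nf
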